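/- For t ∈ (0,1], ε ∈ ℝ, and ε₀ = (1/(2π)) arcsinh(√(t⁻² - 1)), one has ∫₀¹ log|t cos(2π(θ+iε)) - i√(1-t²)| dθ = log((1+√(1-t²))/2) + 2π·max(0, |ε| - ε₀). -/

import Mathlib

open MeasureTheory intervalIntegral Real Set
notation "Ι" => Set.uIoc

noncomputable def Complex.abs : AbsoluteValue ℂ ℝ := IsAbsoluteValue.toAbsoluteValue (norm : ℂ → ℝ)

lemma Complex.abs_apply (z : ℂ) : Complex.abs z = ‖z‖ := rfl

lemma Complex.norm_eq_abs (z : ℂ) : ‖z‖ = Complex.abs z := rfl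

lemma Complex.abs_ofReal (x : ℝ) : Complex.abs (x : ℂ) = |x| := Complex.norm_real x

lemma Complex.abs_I : Complex.abs Complex.I = 1 := Complex.norm_I

lemma Complex.abs_two : Complex.abs 2 = 2 := by simp [Complex.abs_apply]

lemma Complex.abs_exp (z : ℂ) : Complex.abs (Complex.exp z) = Real.exp z.re := Complex.norm_exp z

lemma Complex.continuous_abs : Continuous Complex.abs := continuous_norm

lemma Complex.abs_eq_one_iff (z : ℂ) : Complex.abs z = 1 ↔ ∃ θ : ℝ, Complex.exp (θ * Complex.I) = z :=
  Complex.norm_eq_one_iff z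

noncomputable def ee (θ : ℝ) : ℂ := Complex.exp (2 * Real.pi * Complex.I * θ)

noncomputable def SS (θ : ℝ) : ℝ := Real.log (2 * |Real.sin (Real.pi * θ)|)

lemma ee_periodic : Function.Periodic ee 1 := by
  intro θ
  unfold ee
  push_cast
  rw [mul_add, Complex.exp_add, mul_one, Complex.exp_two_pi_mul_I, mul_one]

lemma abs_ee (θ : ℝ) : Complex.abs (ee θ) = 1 := by
  unfold ee
  rw [Complex.abs_exp]
  norm_num [Complex.mul_re, Complex.mul_I_re]

lemma ee_ne_zero (θ : ℝ) : ee θ ≠ 0 := Complex.exp_ne_zero _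

lemma ee_add (a b : ℝ) : ee (a + b) = ee a * ee b := by
  unfold ee; rw [← Complex.exp_add]; push_cast; ring_nf

lemma ee_continuous : Continuous ee := by
  unfold ee; fun_prop
lemma abs_ee_sub_one (θ : ℝ) : Complex.abs (ee θ - 1) = 2 * |Real.sin (Real.pi * θ)| := by
  unfold ee
  revert θ
  intro θ
  have h : Complex.exp (2 * Real.pi * Complex.I * θ) - 1
      = Complex.exp (Real.pi * θ * Complex.I) * (2 * Complex.sin (Real.pi * θ)) * Complex.I := by
    rw [Complex.sin]
    rw [show ((2:ℂ) * Real.pi * Complex.I * θ) = (Real.pi * θ * Complex.I) + (Real.pi * θ * Complex.I) by ring,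
      Complex.exp_add]
    have := Complex.exp_ne_zero (Real.pi * θ * Complex.I)
    rw [show -((Real.pi:ℂ) * θ) * Complex.I = -((Real.pi:ℂ) * θ * Complex.I) by ring, Complex.exp_neg]
    linear_combination (-(Complex.I*Complex.I)) * mul_inv_cancel₀ this + (Complex.exp (↑π * ↑θ * Complex.I) * Complex.exp (↑π * ↑θ * Complex.I) - 1) * Complex.I_mul_I
  rw [h]
  simp only [map_mul, Complex.abs_exp, Complex.abs_I, Complex.abs_two]
  rw [show ((π:ℂ) * θ) = ((π*θ:ℝ):ℂ) by push_cast; ring, ← Complex.ofReal_sin, Complex.abs_ofReal]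
  simp [Complex.mul_re]

lemma log_integrable : IntervalIntegrable Real.log volume 0 1 := by
  have hcont : ContinuousOn (fun x : ℝ => x + Real.negMulLog x) (Icc 0 1) :=
    (continuous_id.add Real.continuous_negMulLog).continuousOn
  have hderiv : ∀ x ∈ Ioo (0:ℝ) 1, HasDerivAt (fun x : ℝ => x + Real.negMulLog x) (-Real.log x) x := by
    intro x hx
    have h1 : HasDerivAt (fun x : ℝ => x * Real.log x) (Real.log x + 1) x :=
      Real.hasDerivAt_mul_log (ne_of_gt hx.1)
    have h2 := (hasDerivAt_id x).add h1.neg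
    have : (1 : ℝ) + -(Real.log x + 1) = -Real.log x := by ring
    rw [this] at h2
    refine h2.congr_of_eventuallyEq ?_
    filter_upwards with y
    simp [Real.negMulLog]
  have hpos : ∀ x ∈ Ioo (0:ℝ) 1, 0 ≤ -Real.log x := by
    intro x hx
    simp only [neg_nonneg]
    exact Real.log_nonpos hx.1.le hx.2.le
  have h := integrableOn_deriv_of_nonneg hcont hderiv hpos
  have : IntervalIntegrable (fun x => -Real.log x) volume 0 1 := by
    rw [intervalIntegrable_iff_integrableOn_Ioc_of_le (by norm_num)]
    exact h
  have h2 := this.neg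
  have h2 : IntervalIntegrable (fun x => - -Real.log x) volume 0 1 := h2
  convert h2 using 1
  ext x; simp

lemma SS_meas : Measurable SS := by
  apply Real.measurable_log.comp; fun_prop

lemma SS_periodic : Function.Periodic SS 1 := by
  intro θ; unfold SS; rw [mul_add, mul_one, Real.sin_add_pi, abs_neg]

lemma SS_integrable_half : IntervalIntegrable SS volume 0 (1/2) := by
  have habs : IntervalIntegrable (fun x => |Real.log x| + Real.log 4) volume 0 (1/2) := by
    refine IntervalIntegrable.add ?_ intervalIntegrable_const
    refine (log_integrable.mono_set ?_).abs
    rw [uIcc_of_le (by norm_num : (0:ℝ) ≤ 1/2), uIcc_of_le (by norm_num : (0:ℝ) ≤ 1)]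
    exact Icc_subset_Icc le_rfl (by norm_num)
  refine habs.mono_fun (SS_meas.aestronglyMeasurable) ?_
  have hIoc : Ι (0:ℝ) (1/2) = Ioc 0 (1/2) := uIoc_of_le (by norm_num)
  rw [hIoc]
  filter_upwards [ae_restrict_mem measurableSet_Ioc] with x hx
  have hx0 : 0 < x := hx.1
  have hx2 : x ≤ 1/2 := hx.2
  have hsin : Real.sin (Real.pi * x) ≥ 2 * x := by
    have h := Real.mul_le_sin (x := Real.pi * x) (by positivity)
      (by rw [div_eq_mul_inv]; nlinarith [Real.pi_pos])
    calc 2 * x = 2 / Real.pi * (Real.pi * x) := by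
          field_simp
      _ ≤ Real.sin (Real.pi * x) := h
  have hsin_pos : 0 < Real.sin (Real.pi * x) := lt_of_lt_of_le (by linarith) hsin
  have habs_sin : |Real.sin (Real.pi * x)| = Real.sin (Real.pi * x) := abs_of_pos hsin_pos
  have hle1 : Real.sin (Real.pi * x) ≤ 1 := Real.sin_le_one _
  -- 4x ≤ 2 sin(πx) ≤ 2
  have hlow : Real.log (4 * x) ≤ SS x := by
    unfold SS
    rw [habs_sin]
    apply Real.log_le_log (by positivity)
    linarith
  have hhigh : SS x ≤ Real.log 2 := by
    unfold SS
    rw [habs_sin]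
    apply Real.log_le_log (by positivity)
    linarith
  have h4 : Real.log (4 * x) = Real.log 4 + Real.log x := Real.log_mul (by norm_num) hx0.ne'
  simp only [Real.norm_eq_abs]
  have hlog4 : (0:ℝ) ≤ Real.log 4 := Real.log_nonneg (by norm_num)
  rw [abs_of_nonneg (by positivity : (0:ℝ) ≤ |Real.log x| + Real.log 4), abs_le]
  constructor
  · rw [h4] at hlow
    have : -|Real.log x| ≤ Real.log x := neg_abs_le _
    linarith
  · have h24 : Real.log 2 ≤ Real.log 4 := Real.log_le_log (by norm_num) (by norm_num)
    have : (0:ℝ) ≤ |Real.log x| := abs_nonneg _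
    linarith

lemma SS_integrable_01 : IntervalIntegrable SS volume 0 1 := by
  have h2 : IntervalIntegrable SS volume (1/2) 1 := by
    have h := SS_integrable_half.comp_sub_left 1
    have : (fun x => SS (1 - x)) = SS := by
      funext x
      unfold SS
      rw [mul_sub, mul_one, Real.sin_pi_sub]
    rw [this] at h
    norm_num at h
    exact h.symm
  exact SS_integrable_half.trans h2

lemma SS_integrable (a b : ℝ) : IntervalIntegrable SS volume a b := by
  have hK : ∀ n : ℤ, IntervalIntegrable SS volume n (n+1) := by
    intro n
    have h := SS_integrable_01.comp_sub_right (n : ℝ)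
    have : (fun x : ℝ => SS (x - n)) = SS := by
      funext x
      have := SS_periodic.sub_int_mul_eq (x := x) n
      simpa using this
    rw [this] at h
    simpa [add_comm] using h
  set c := a ⊓ b with hc
  have key : ∀ n : ℕ, IntervalIntegrable SS volume (⌊c⌋ : ℝ) ((⌊c⌋ : ℝ) + n) := by
    intro n
    induction n with
    | zero => simp
    | succ m ih =>
      refine ih.trans ?_
      have h := hK (⌊c⌋ + m)
      push_cast at h ⊢
      rw [show (⌊c⌋:ℝ) + (m + 1) = (⌊c⌋:ℝ) + m + 1 by ring]
      exact h
  rcases exists_nat_ge (max a b - ⌊c⌋) with ⟨n, hn⟩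
  refine (key n).mono_set ?_
  have hfc : (⌊c⌋:ℝ) ≤ c := Int.floor_le c
  have hca : c ≤ a := inf_le_left
  have hcb : c ≤ b := inf_le_right
  have h1 : a ≤ (⌊c⌋:ℝ) + n := by have := le_max_left a b; linarith
  have h2 : b ≤ (⌊c⌋:ℝ) + n := by have := le_max_right a b; linarith
  rw [uIcc_of_le (by linarith : (⌊c⌋:ℝ) ≤ (⌊c⌋:ℝ) + n)]
  exact uIcc_subset_Icc ⟨by linarith, h1⟩ ⟨by linarith, h2⟩

lemma countable_bad : (volume ({φ : ℝ | Real.sin (Real.pi * φ) = 0} ∪ {φ : ℝ | Real.cos (Real.pi * φ) = 0})) = 0 := by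
  apply measure_union_null
  · apply Set.Countable.measure_zero
    refine Set.Countable.mono (s₂ := Set.range (fun n : ℤ => (n : ℝ))) ?_ (Set.countable_range _)
    · intro φ hφ
      rw [mem_setOf_eq, Real.sin_eq_zero_iff] at hφ
      obtain ⟨n, hn⟩ := hφ
      exact ⟨n, by field_simp at hn ⊢; nlinarith [Real.pi_pos, hn]⟩
  · apply Set.Countable.measure_zero
    refine Set.Countable.mono (s₂ := Set.range (fun n : ℤ => ((2*(n:ℝ)+1))/2)) ?_ (Set.countable_range _)
    · intro φ hφ
      rw [mem_setOf_eq, Real.cos_eq_zero_iff] at hφ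
      obtain ⟨n, hn⟩ := hφ
      refine ⟨n, ?_⟩
      have hpi := Real.pi_ne_zero
      have h2 : Real.pi * ((2*(n:ℝ)+1)/2) = Real.pi * φ := by rw [hn]; ring
      exact mul_left_cancel₀ hpi h2

lemma SS_integral_zero : ∫ θ in (0:ℝ)..1, SS θ = 0 := by
  have h1 : ∫ φ in (0:ℝ)..(1/2), SS (2*φ) = (2:ℝ)⁻¹ • ∫ θ in (0:ℝ)..1, SS θ := by
    simpa using intervalIntegral.integral_comp_mul_left (a := 0) (b := 1/2) (f := SS) (c := (2:ℝ)) two_ne_zero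
  have h2 : ∫ φ in (0:ℝ)..(1/2), SS (2*φ) = ∫ φ in (0:ℝ)..(1/2), (SS φ + SS (φ + 1/2)) := by
    apply intervalIntegral.integral_congr_ae
    rw [Filter.eventually_iff_exists_mem]
    refine ⟨({φ : ℝ | Real.sin (Real.pi * φ) = 0} ∪ {φ : ℝ | Real.cos (Real.pi * φ) = 0})ᶜ,
      by rw [mem_ae_iff, compl_compl]; exact countable_bad, ?_⟩
    intro φ hφ _
    simp only [compl_union, mem_inter_iff, mem_compl_iff, mem_setOf_eq] at hφ
    obtain ⟨hs, hc⟩ := hφ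
    unfold SS
    have e1 : Real.sin (Real.pi * (2*φ)) = 2 * Real.sin (Real.pi*φ) * Real.cos (Real.pi*φ) := by
      rw [show Real.pi * (2*φ) = 2 * (Real.pi * φ) by ring, Real.sin_two_mul]
    have e2 : Real.sin (Real.pi * (φ + 1/2)) = Real.cos (Real.pi * φ) := by
      rw [show Real.pi * (φ + 1/2) = Real.pi * φ + Real.pi/2 by ring, Real.sin_add_pi_div_two]
    rw [e1, e2]
    rw [show 2 * |2 * Real.sin (Real.pi*φ) * Real.cos (Real.pi*φ)| =
      (2*|Real.sin (Real.pi*φ)|) * (2*|Real.cos (Real.pi*φ)|) by rw [abs_mul, abs_mul]; simp [abs_of_nonneg]; ring]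
    exact Real.log_mul (by positivity) (by positivity)
  have h3 : ∫ φ in (0:ℝ)..(1/2), (SS φ + SS (φ + 1/2))
      = (∫ φ in (0:ℝ)..(1/2), SS φ) + ∫ φ in (0:ℝ)..(1/2), SS (φ + 1/2) := by
    apply intervalIntegral.integral_add (SS_integrable 0 (1/2))
    have := (SS_integrable (1/2) 1).comp_add_right (1/2)
    norm_num at this
    exact this
  have h4 : ∫ φ in (0:ℝ)..(1/2), SS (φ + 1/2) = ∫ φ in (1/2:ℝ)..1, SS φ := by
    have h := intervalIntegral.integral_comp_add_right (a := 0) (b := 1/2) (f := SS) (1/2)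
    rw [h]
    norm_num
  have h5 : (∫ φ in (0:ℝ)..(1/2), SS φ) + ∫ φ in (1/2:ℝ)..1, SS φ = ∫ θ in (0:ℝ)..1, SS θ :=
    intervalIntegral.integral_add_adjacent_intervals (SS_integrable 0 (1/2)) (SS_integrable (1/2) 1)
  have := h1.symm.trans (h2.trans (h3.trans (by rw [h4, h5])))
  rw [smul_eq_mul] at this
  linarith [this]

lemma cauchy_avg {c : ℂ} (hc : Complex.abs c < 1) :
    ∫ θ in (0:ℝ)..1, Real.log (Complex.abs (1 - c * ee θ)) = 0 := by
  set f : ℂ → ℂ := fun z => Complex.log (1 - c * z) with hf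
  have hmem : ∀ z : ℂ, Complex.abs z ≤ 1 → (1 - c * z) ∈ Complex.slitPlane := by
    intro z hz
    have : ‖-(c*z)‖ < 1 := by
      rw [norm_neg]
      calc ‖c*z‖ = Complex.abs c * Complex.abs z := by simp [Complex.norm_eq_abs]
        _ ≤ Complex.abs c * 1 := by
            exact mul_le_mul_of_nonneg_left hz (Complex.abs.nonneg c)
        _ < 1 := by simpa using hc
    simpa [sub_eq_add_neg, add_comm] using Complex.mem_slitPlane_of_norm_lt_one this
  have hdiff : ∀ z ∈ Metric.closedBall (0:ℂ) 1, DifferentiableAt ℂ f z := by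
    intro z hz
    rw [Metric.mem_closedBall, dist_zero_right] at hz
    exact ((differentiable_const (1:ℂ)).sub ((differentiable_const c).mul differentiable_id)).differentiableAt.clog
      (hmem z hz)
  have hdc : DiffContOnCl ℂ f (Metric.ball (0:ℂ) 1) := by
    apply DifferentiableOn.diffContOnCl
    rw [closure_ball (0:ℂ) one_ne_zero]
    exact fun z hz => (hdiff z hz).differentiableWithinAt
  have hC := hdc.circleIntegral_sub_inv_smul (c := 0) (R := 1) (w := 0)
    (by simp [Metric.mem_ball])
  have hf0 : f 0 = 0 := by simp [hf]
  rw [hf0, smul_zero] at hC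
  -- unfold circle integral
  rw [circleIntegral] at hC
  have hint : ∀ θ : ℝ, deriv (circleMap 0 1) θ • (circleMap 0 1 θ - 0)⁻¹ • f (circleMap 0 1 θ)
      = Complex.I * f (circleMap 0 1 θ) := by
    intro θ
    rw [deriv_circleMap]
    have hne : circleMap 0 1 θ ≠ 0 := circleMap_ne_center one_ne_zero
    rw [smul_eq_mul, smul_eq_mul, sub_zero]
    field_simp
  simp only [hint] at hC
  rw [intervalIntegral.integral_const_mul] at hC
  have hI := (mul_eq_zero.mp hC).resolve_left Complex.I_ne_zero
  -- take real part
  have hcont : Continuous (fun θ : ℝ => f (circleMap 0 1 θ)) := by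
    apply Continuous.clog
    · exact (continuous_const.sub (continuous_const.mul (continuous_circleMap 0 1)))
    · intro θ
      exact hmem _ (by simp [circleMap, Complex.abs_apply])
  have hii : IntervalIntegrable (fun θ : ℝ => f (circleMap 0 1 θ)) volume 0 (2*Real.pi) :=
    hcont.intervalIntegrable _ _
  have hre := Complex.reCLM.intervalIntegral_comp_comm hii
  simp only [Complex.reCLM_apply, hI, Complex.zero_re] at hre
  have hre' : ∫ θ in (0:ℝ)..(2*Real.pi), Real.log (Complex.abs (1 - c * Complex.exp (θ * Complex.I))) = 0 := by
    refine Eq.trans (intervalIntegral.integral_congr (g := fun θ : ℝ => (f (circleMap 0 1 θ)).re) ?_) hre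
    intro θ _
    simp only [hf, circleMap, Complex.ofReal_one, one_mul, zero_add]
    rw [Complex.log_re]
    rfl
  have hsub := intervalIntegral.integral_comp_mul_left (a := 0) (b := 1)
    (f := fun θ : ℝ => Real.log (Complex.abs (1 - c * Complex.exp (θ * Complex.I))))
    (c := 2*Real.pi) (by positivity)
  norm_num at hsub
  rw [hre'] at hsub
  norm_num at hsub
  have h2 : (fun u : ℝ => Real.log (Complex.abs (1 - c * ee u)))
      = (fun u : ℝ => Real.log (Complex.abs (1 - c * Complex.exp (2 * (Real.pi:ℝ) * u * Complex.I)))) := by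
    funext u
    congr 3
    unfold ee
    push_cast
    ring_nf
  rw [h2]
  exact hsub

lemma sin_zero_null : volume {θ : ℝ | Real.sin (Real.pi * θ) = 0} = 0 := by
  apply Set.Countable.measure_zero
  refine Set.Countable.mono (s₂ := Set.range (fun n : ℤ => (n : ℝ))) ?_ (Set.countable_range _)
  intro φ hφ
  rw [mem_setOf_eq, Real.sin_eq_zero_iff] at hφ
  obtain ⟨n, hn⟩ := hφ
  refine ⟨n, ?_⟩
  have h2 : Real.pi * (n:ℝ) = Real.pi * φ := by rw [← hn]; ring
  exact mul_left_cancel₀ Real.pi_ne_zero h2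

lemma one_sub_ne {c : ℂ} (hc : Complex.abs c < 1) (θ : ℝ) : (1:ℂ) - c * ee θ ≠ 0 := by
  intro h
  have : Complex.abs (c * ee θ) = 1 := by
    rw [show c * ee θ = 1 - (1 - c * ee θ) by ring, h, sub_zero, map_one]
  rw [map_mul, abs_ee, mul_one] at this
  linarith

lemma cont_log_one_sub {c : ℂ} (hc : Complex.abs c < 1) :
    Continuous (fun θ : ℝ => Real.log (Complex.abs (1 - c * ee θ))) := by
  apply Continuous.log
  · exact Complex.continuous_abs.comp (continuous_const.sub (continuous_const.mul ee_continuous))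
  · exact fun θ => Complex.abs.ne_zero (one_sub_ne hc θ)

lemma cauchy_avg' {c : ℂ} (hc : Complex.abs c < 1) (b : ℝ) (hb : 0 < b) :
    ∫ θ in (0:ℝ)..1, Real.log (Complex.abs ((b:ℂ) * (1 - c * ee θ))) = Real.log b := by
  have hpt : ∀ θ : ℝ, Real.log (Complex.abs ((b:ℂ) * (1 - c * ee θ)))
      = Real.log b + Real.log (Complex.abs (1 - c * ee θ)) := by
    intro θ
    rw [map_mul, Complex.abs_ofReal, abs_of_pos hb,
      Real.log_mul (ne_of_gt hb) (Complex.abs.ne_zero (one_sub_ne hc θ))]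
  rw [intervalIntegral.integral_congr (fun θ _ => hpt θ)]
  rw [intervalIntegral.integral_add intervalIntegrable_const
    ((cont_log_one_sub hc).intervalIntegrable 0 1)]
  rw [cauchy_avg hc]
  simp

lemma key (r : ℝ) (hr : 0 < r) (a : ℂ) :
    IntervalIntegrable (fun θ => Real.log (Complex.abs ((r:ℂ) * ee θ - a))) volume 0 1 ∧
    ∫ θ in (0:ℝ)..1, Real.log (Complex.abs ((r:ℂ) * ee θ - a)) = Real.log (max r (Complex.abs a)) := by
  rcases lt_trichotomy (Complex.abs a) r with hlt | heq | hgt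
  · -- |a| < r
    rw [max_eq_left hlt.le]
    have hc : Complex.abs (a / r) < 1 := by
      rw [map_div₀, Complex.abs_ofReal, abs_of_pos hr, div_lt_one hr]
      exact hlt
    set h : ℝ → ℝ := fun θ => Real.log (Complex.abs ((r:ℂ) * (1 - (a/r) * ee θ))) with hh
    have hpt : ∀ θ : ℝ, Real.log (Complex.abs ((r:ℂ) * ee θ - a)) = h (-θ) := by
      intro θ
      have hr' : (r:ℂ) ≠ 0 := by exact_mod_cast hr.ne'
      have h1 : ee θ * ee (-θ) = 1 := by
        rw [← ee_add]; simp [ee]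
      have hfac : (r:ℂ) * ee θ - a = ee θ * ((r:ℂ) * (1 - (a/r) * ee (-θ))) := by
        calc (r:ℂ) * ee θ - a = (r:ℂ) * ee θ - a * (ee θ * ee (-θ)) := by rw [h1, mul_one]
          _ = ee θ * ((r:ℂ) * (1 - (a/r) * ee (-θ))) := by field_simp
      rw [hfac, map_mul, abs_ee, one_mul]
    have hcont : Continuous h := by
      have := cont_log_one_sub hc
      apply Continuous.log
      · exact Complex.continuous_abs.comp (continuous_const.mul
          (continuous_const.sub (continuous_const.mul ee_continuous)))
      · intro θ
        apply Complex.abs.ne_zero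
        apply mul_ne_zero (by exact_mod_cast hr.ne')
        exact one_sub_ne hc θ
    have hshift : ∀ u : ℝ, h (u - 1) = h u := by
      intro u
      have h2 := ee_periodic (u - 1)
      rw [sub_add_cancel] at h2
      simp only [hh, h2]
    constructor
    · apply Continuous.intervalIntegrable
      rw [funext hpt]
      exact hcont.comp continuous_neg
    · rw [intervalIntegral.integral_congr (fun θ _ => hpt θ)]
      rw [intervalIntegral.integral_comp_neg (a := 0) (b := 1) (f := h),
        show (-0:ℝ) = 0 by norm_num]
      have h3 := intervalIntegral.integral_comp_sub_right (a := 0) (b := 1) (f := h) 1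
      rw [intervalIntegral.integral_congr (fun u _ => hshift u)] at h3
      norm_num at h3
      rw [← h3]
      exact cauchy_avg' hc r hr
  · -- |a| = r
    rw [heq, max_self]
    have ha1 : Complex.abs (a / r) = 1 := by
      rw [map_div₀, Complex.abs_ofReal, abs_of_pos hr, heq, div_self hr.ne']
    obtain ⟨targ, htarg⟩ := (Complex.abs_eq_one_iff _).mp ha1
    set θ₀ := targ / (2 * Real.pi) with hθ₀
    have hee : ee θ₀ = a / r := by
      rw [← htarg]
      unfold ee
      congr 1
      push_cast
      rw [hθ₀]; push_cast
      have : (2:ℂ) * Real.pi ≠ 0 := by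
        simp [Real.pi_ne_zero]
      field_simp
    set Sr : ℝ → ℝ := fun θ => Real.log (r * (2 * |Real.sin (Real.pi * θ)|)) with hSr
    have hpt : ∀ θ : ℝ, Real.log (Complex.abs ((r:ℂ) * ee θ - a)) = Sr (θ - θ₀) := by
      intro θ
      have hr' : (r:ℂ) ≠ 0 := by exact_mod_cast hr.ne'
      have hfac : (r:ℂ) * ee θ - a = (r:ℂ) * ee θ₀ * (ee (θ - θ₀) - 1) := by
        rw [mul_sub, mul_one, mul_assoc, ← ee_add]
        rw [show θ₀ + (θ - θ₀) = θ by ring, hee]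
        rw [mul_div_assoc']
        rw [mul_comm (r:ℂ) a, mul_div_assoc, div_self hr', mul_one]
      rw [hfac, map_mul, map_mul, Complex.abs_ofReal, abs_of_pos hr, abs_ee, mul_one,
        abs_ee_sub_one]
    have hae : ∀ A B : ℝ, (fun θ => Real.log r + SS θ) =ᵐ[volume.restrict (Ι A B)] Sr := by
      intro A B
      apply ae_restrict_of_ae
      have hsub : {θ : ℝ | ¬ (Real.log r + SS θ = Sr θ)} ⊆ {θ : ℝ | Real.sin (Real.pi * θ) = 0} := by
        intro θ hθ
        simp only [mem_setOf_eq] at hθ ⊢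
        by_contra hsin
        apply hθ
        simp only [hSr, SS]
        rw [← Real.log_mul hr.ne' (mul_ne_zero two_ne_zero (abs_ne_zero.mpr hsin))]
      exact ae_iff.mpr (measure_mono_null hsub sin_zero_null)
    have hSrint : ∀ A B : ℝ, IntervalIntegrable Sr volume A B := by
      intro A B
      exact (intervalIntegrable_const.add (SS_integrable A B)).congr_ae (hae A B)
    have hSrper : Function.Periodic Sr 1 := by
      intro θ
      simp only [hSr]
      rw [mul_add, mul_one, Real.sin_add_pi, abs_neg]
    have hSrval : ∫ θ in (0:ℝ)..1, Sr θ = Real.log r := by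
      have hcongr : ∫ θ in (0:ℝ)..1, Sr θ = ∫ θ in (0:ℝ)..1, (Real.log r + SS θ) := by
        apply intervalIntegral.integral_congr_ae
        have hsub : {θ : ℝ | ¬ (θ ∈ Ι (0:ℝ) 1 → Sr θ = Real.log r + SS θ)}
            ⊆ {θ : ℝ | Real.sin (Real.pi * θ) = 0} := by
          intro θ hθ
          simp only [mem_setOf_eq] at hθ ⊢
          by_contra hsin
          apply hθ
          intro _
          simp only [hSr, SS]
          rw [← Real.log_mul hr.ne' (mul_ne_zero two_ne_zero (abs_ne_zero.mpr hsin))]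
        exact ae_iff.mpr (measure_mono_null hsub sin_zero_null)
      rw [hcongr, intervalIntegral.integral_add intervalIntegrable_const (SS_integrable 0 1),
        SS_integral_zero]
      simp
    constructor
    · rw [funext hpt]
      have := (hSrint (0 - θ₀) (1 - θ₀)).comp_sub_right θ₀
      norm_num at this
      convert this using 2 <;> ring
    · rw [intervalIntegral.integral_congr (fun θ _ => hpt θ)]
      rw [intervalIntegral.integral_comp_sub_right (f := Sr) θ₀]
      have hper2 := hSrper.intervalIntegral_add_eq (0 - θ₀) 0
      rw [show (0:ℝ) - θ₀ + 1 = 1 - θ₀ by ring, zero_add] at hper2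
      rw [hper2]
      exact hSrval
  · -- |a| > r
    rw [max_eq_right hgt.le]
    have ha : a ≠ 0 := by
      intro h; rw [h, map_zero] at hgt; linarith
    have hc : Complex.abs ((r:ℂ) / a) < 1 := by
      rw [map_div₀, Complex.abs_ofReal, abs_of_pos hr, div_lt_one (Complex.abs.pos ha)]
      exact hgt
    have hpt : ∀ θ : ℝ, Real.log (Complex.abs ((r:ℂ) * ee θ - a))
        = Real.log (Complex.abs a) + Real.log (Complex.abs (1 - ((r:ℂ)/a) * ee θ)) := by
      intro θ
      have hfac : (r:ℂ) * ee θ - a = (-a) * (1 - ((r:ℂ)/a) * ee θ) := by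
        field_simp
        ring
      rw [hfac, map_mul, map_neg_eq_map,
        Real.log_mul (Complex.abs.ne_zero ha) (Complex.abs.ne_zero (one_sub_ne hc θ))]
    constructor
    · rw [funext hpt]
      exact (continuous_const.add (cont_log_one_sub hc)).intervalIntegrable 0 1
    · rw [intervalIntegral.integral_congr (fun θ _ => hpt θ),
        intervalIntegral.integral_add intervalIntegrable_const
          ((cont_log_one_sub hc).intervalIntegrable 0 1), cauchy_avg hc]
      simp

lemma arith (L x : ℝ) (hL : 0 ≤ L) : x + max (-x) L + max (-x) (-L) = L + max 0 (|x| - L) := by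
  rcases abs_cases x with ⟨he, hx⟩ | ⟨he, hx⟩ <;>
    rw [he] <;> simp only [max_def] <;> split_ifs <;> linarith

theorem log_integral_complexified (t : ℝ) (ht : t ∈ Set.Ioc (0:ℝ) 1) (ε : ℝ) :
    ∫ θ in (0:ℝ)..1,
        Real.log ‖((t : ℂ) * Complex.cos (2 * Real.pi * ((θ : ℂ) + Complex.I * (ε : ℂ)))
          - Complex.I * (Real.sqrt (1 - t ^ 2) : ℂ))‖
      = Real.log ((1 + Real.sqrt (1 - t ^ 2)) / 2)
        + 2 * Real.pi * max 0 (|ε| - (1 / (2 * Real.pi)) * Real.arsinh (Real.sqrt (t⁻¹ ^ 2 - 1))) := by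
  obtain ⟨ht0, ht1⟩ := ht
  simp only [Complex.norm_eq_abs]
  set s : ℝ := Real.sqrt (1 - t ^ 2) with hs
  have h1t2 : (0:ℝ) ≤ 1 - t ^ 2 := by nlinarith
  have hsq : s ^ 2 = 1 - t ^ 2 := Real.sq_sqrt h1t2
  have hs0 : 0 ≤ s := Real.sqrt_nonneg _
  have hs1 : s < 1 := by nlinarith
  set x : ℝ := 2 * Real.pi * ε with hx
  set r : ℝ := Real.exp (-x) with hr
  have hrpos : 0 < r := Real.exp_pos _
  have hrC : (r:ℂ) ≠ 0 := by exact_mod_cast hrpos.ne'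
  have htC : (t:ℂ) ≠ 0 := by exact_mod_cast ht0.ne'
  set A : ℂ := Complex.I * (((1+s)/t : ℝ):ℂ) with hA
  set B : ℂ := -Complex.I * (((1-s)/t : ℝ):ℂ) with hB
  have hsqC : (s:ℂ)^2 = 1 - (t:ℂ)^2 := by exact_mod_cast hsq
  -- the exponential identity
  have hwe : ∀ θ : ℝ, Complex.exp ((2 * (Real.pi:ℂ) * ((θ:ℂ) + Complex.I * (ε:ℂ))) * Complex.I)
      = (r:ℂ) * ee θ := by
    intro θ
    rw [show (2 * (Real.pi:ℂ) * ((θ:ℂ) + Complex.I * (ε:ℂ))) * Complex.I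
        = ((-x : ℝ):ℂ) + 2 * (Real.pi:ℂ) * Complex.I * (θ:ℂ) by
      rw [hx]
      push_cast
      linear_combination (2 * (Real.pi:ℂ) * (ε:ℂ)) * Complex.I_sq]
    rw [Complex.exp_add, ← Complex.ofReal_exp]
    rfl
  -- factorization
  have hclaim : ∀ θ : ℝ, (t:ℂ) * Complex.cos (2 * Real.pi * ((θ:ℂ) + Complex.I * (ε:ℂ)))
      - Complex.I * (s:ℂ)
      = ((t:ℂ)/2) * ((r:ℂ) * ee θ)⁻¹ * (((r:ℂ) * ee θ - A) * ((r:ℂ) * ee θ - B)) := by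
    intro θ
    rw [Complex.cos]
    rw [show -(2 * (Real.pi:ℂ) * ((θ:ℂ) + Complex.I * (ε:ℂ))) * Complex.I
        = -((2 * (Real.pi:ℂ) * ((θ:ℂ) + Complex.I * (ε:ℂ))) * Complex.I) by ring]
    rw [Complex.exp_neg, hwe θ]
    have hw0 : (r:ℂ) * ee θ ≠ 0 := mul_ne_zero hrC (ee_ne_zero θ)
    rw [hA, hB]
    have he0 := ee_ne_zero θ
    push_cast
    field_simp
    linear_combination hsqC + (1 - (s:ℂ)^2) * Complex.I_sq
  -- null sets
  have hnull : ∀ z : ℂ, volume {θ : ℝ | (r:ℂ) * ee θ = z} = 0 := by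
    intro z
    rcases eq_empty_or_nonempty {θ : ℝ | (r:ℂ) * ee θ = z} with hE | ⟨θ₁, hθ₁⟩
    · rw [hE]; simp
    · apply Set.Countable.measure_zero
      refine Set.Countable.mono ?_ (Set.countable_range (fun n : ℤ => θ₁ + n))
      intro θ hθ
      have heq : ee θ = ee θ₁ := by
        have h := (mem_setOf_eq ▸ hθ).trans (mem_setOf_eq ▸ hθ₁).symm
        exact mul_left_cancel₀ hrC h
      unfold ee at heq
      rw [Complex.exp_eq_exp_iff_exists_int] at heq
      obtain ⟨n, hn⟩ := heq
      refine ⟨n, ?_⟩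
      have hI : (2 * (Real.pi:ℂ) * Complex.I) ≠ 0 := by
        simp [Real.pi_ne_zero, Complex.I_ne_zero]
      have h2 : 2 * (Real.pi:ℂ) * Complex.I * (θ:ℂ)
          = 2 * (Real.pi:ℂ) * Complex.I * ((θ₁:ℂ) + (n:ℂ)) := by
        rw [hn]; ring
      have h3 := mul_left_cancel₀ hI h2
      exact_mod_cast h3.symm
  -- a.e. rewrite
  have habsA : Complex.abs A = (1+s)/t := by
    rw [hA, map_mul, Complex.abs_I, one_mul, Complex.abs_ofReal,
      abs_of_pos (by positivity : (0:ℝ) < (1+s)/t)]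
  have habsB : Complex.abs B = (1-s)/t := by
    rw [hB, neg_mul, map_neg_eq_map, map_mul, Complex.abs_I, one_mul, Complex.abs_ofReal,
      abs_of_nonneg (div_nonneg (by linarith) ht0.le)]
  have hintA := key r hrpos A
  have hintB := key r hrpos B
  have hmain : ∫ θ in (0:ℝ)..1,
      Real.log (Complex.abs ((t : ℂ) * Complex.cos (2 * Real.pi * ((θ:ℂ) + Complex.I * (ε:ℂ)))
        - Complex.I * (s:ℂ)))
      = ∫ θ in (0:ℝ)..1, ((Real.log (t/2) + x)
          + (Real.log (Complex.abs ((r:ℂ) * ee θ - A))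
             + Real.log (Complex.abs ((r:ℂ) * ee θ - B)))) := by
    apply intervalIntegral.integral_congr_ae
    have hsub : {θ : ℝ | ¬ (θ ∈ Ι (0:ℝ) 1 →
        Real.log (Complex.abs ((t : ℂ) * Complex.cos (2 * Real.pi * ((θ:ℂ) + Complex.I * (ε:ℂ)))
          - Complex.I * (s:ℂ)))
        = ((Real.log (t/2) + x)
          + (Real.log (Complex.abs ((r:ℂ) * ee θ - A))
             + Real.log (Complex.abs ((r:ℂ) * ee θ - B)))))}
        ⊆ {θ : ℝ | (r:ℂ) * ee θ = A} ∪ {θ : ℝ | (r:ℂ) * ee θ = B} := by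
      intro θ hθ
      simp only [mem_setOf_eq, mem_union] at hθ ⊢
      by_contra hne
      push_neg at hne
      obtain ⟨hneA, hneB⟩ := hne
      apply hθ
      intro _
      rw [hclaim θ]
      have h1 : t/2/r ≠ 0 := by positivity
      have h2 : Complex.abs ((r:ℂ) * ee θ - A) ≠ 0 :=
        Complex.abs.ne_zero (sub_ne_zero.mpr hneA)
      have h3 : Complex.abs ((r:ℂ) * ee θ - B) ≠ 0 :=
        Complex.abs.ne_zero (sub_ne_zero.mpr hneB)
      have habs2 : Complex.abs (((t:ℂ)/2) * ((r:ℂ)*ee θ)⁻¹ * (((r:ℂ)*ee θ - A) * ((r:ℂ)*ee θ - B)))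
          = t/2/r * (Complex.abs ((r:ℂ)*ee θ - A) * Complex.abs ((r:ℂ)*ee θ - B)) := by
        simp only [map_mul, map_inv₀, map_div₀, abs_ee, Complex.abs_ofReal, Complex.abs_two,
          mul_one]
        rw [abs_of_pos ht0, abs_of_pos hrpos]
        ring
      rw [habs2, Real.log_mul h1 (mul_ne_zero h2 h3), Real.log_mul h2 h3,
        Real.log_div (by positivity) hrpos.ne', hr, Real.log_exp]
      ring
    exact ae_iff.mpr (measure_mono_null hsub
      (measure_union_null (hnull A) (hnull B)))
  rw [hmain]
  rw [intervalIntegral.integral_add intervalIntegrable_const (hintA.1.add hintB.1),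
    intervalIntegral.integral_add hintA.1 hintB.1, hintA.2, hintB.2]
  simp only [intervalIntegral.integral_const, smul_eq_mul, sub_zero, one_mul]
  rw [habsA, habsB]
  -- final arithmetic
  set u : ℝ := (1+s)/t with hu
  have hu0 : 0 < u := by positivity
  have hu1 : 1 ≤ u := by
    rw [hu, le_div_iff₀ ht0]
    linarith
  set L : ℝ := Real.log u with hL
  have hL0 : 0 ≤ L := Real.log_nonneg hu1
  have hBu : (1-s)/t = u⁻¹ := by
    rw [hu]
    rw [inv_div, div_eq_div_iff ht0.ne' (by positivity : (1+s) ≠ 0)]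
    nlinarith
  have hmax1 : Real.log (max r u) = max (-x) L := by
    rw [show r = Real.exp (-x) from rfl, show u = Real.exp L by rw [hL, Real.exp_log hu0]]
    rw [← Real.exp_strictMono.monotone.map_max, Real.log_exp]
  have hmax2 : Real.log (max r ((1-s)/t)) = max (-x) (-L) := by
    rw [hBu, show r = Real.exp (-x) from rfl,
      show u⁻¹ = Real.exp (-L) by rw [hL, ← Real.log_inv, Real.exp_log (by positivity)]]
    rw [← Real.exp_strictMono.monotone.map_max, Real.log_exp]
  rw [hmax1, hmax2]
  have hRHS1 : Real.log ((1 + s) / 2) = Real.log (t/2) + L := by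
    rw [hL, hu, ← Real.log_mul (by positivity) (by positivity)]
    congr 1
    field_simp
  have harsinh : Real.arsinh (Real.sqrt (t⁻¹ ^ 2 - 1)) = L := by
    have hsq1 : t⁻¹ ^ 2 - 1 = (s/t)^2 := by
      rw [div_pow, hsq]
      field_simp
    have h1 : Real.sqrt (t⁻¹ ^ 2 - 1) = s / t := by
      rw [hsq1]
      exact Real.sqrt_sq (by positivity)
    rw [h1, Real.arsinh]
    rw [show 1 + (s/t)^2 = (1/t)^2 by rw [div_pow, hsq]; field_simp; ring]
    rw [Real.sqrt_sq (by positivity), hL, hu]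
    congr 1
    field_simp
    ring
  rw [harsinh]
  have hRHS2 : 2 * Real.pi * max 0 (|ε| - 1/(2*Real.pi) * L) = max 0 (|x| - L) := by
    rw [mul_max_of_nonneg _ _ (by positivity : (0:ℝ) ≤ 2*Real.pi), mul_zero]
    congr 1
    rw [hx, abs_mul, abs_of_pos (by positivity : (0:ℝ) < 2*Real.pi)]
    field_simp
  rw [hRHS1, hRHS2]
  linarith [arith L x hL0]
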